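/- arXiv:1908.01426 — 2 statements merged into one kernel-verified Lean document; each statement's English description precedes it below -/
import Mathlib

section
/- For n even, the cyclic sequence obtained by listing p₁,…,p_{n/2} followed by p_n, p_{n-1},…,p_{n/2+1} requires at least C(n/2, 2) adjacent transpositions (in the cyclic sense, where the first and last positions are also adjacent) to be transformed into a cyclic rotation or reflection of the identity ordering p₁,…,p_n. -/
namespace SwapLB

/-- `x` lies strictly inside the arc from `p` to `q` (going in the positive direction). -/
def inArc (n : ℕ) [NeZero n] (p q x : ZMod n) : Prop := (x - p).val < (q - p).val

instance (n : ℕ) [NeZero n] (p q x : ZMod n) : Decidable (inArc n p q x) :=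
  inferInstanceAs (Decidable (_ < _))

/-- The chords `{p,q}` and `{r,t}` cross. -/
def Crossing (n : ℕ) [NeZero n] (p q r t : ZMod n) : Prop :=
  ¬ (inArc n p q r ↔ inArc n p q t)

instance (n : ℕ) [NeZero n] (p q r t : ZMod n) : Decidable (Crossing n p q r t) :=
  inferInstanceAs (Decidable (¬ _))

lemma sub_val_cases {n : ℕ} [NeZero n] (a b : ZMod n) :
    (a - b).val + b.val = a.val ∨ (a - b).val + b.val = a.val + n := by
  have h := ZMod.val_add (a - b) b
  rw [sub_add_cancel] at h
  have h1 := ZMod.val_lt (a - b)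
  have h2 := ZMod.val_lt b
  have h3 := ZMod.val_lt (n := n) a
  rcases Nat.lt_or_ge ((a - b).val + b.val) n with hlt | hge
  · left; rw [Nat.mod_eq_of_lt hlt] at h; omega
  · right; rw [Nat.mod_eq_sub_mod hge, Nat.mod_eq_of_lt (by omega)] at h; omega

lemma val_sub_ne_zero {n : ℕ} [NeZero n] {a b : ZMod n} (h : a ≠ b) : (a - b).val ≠ 0 := by
  simp only [ne_eq, ZMod.val_eq_zero, sub_eq_zero]; exact h

lemma val_add_one {n : ℕ} [NeZero n] (hn2 : 2 ≤ n) (z : ZMod n) :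
    (z + 1).val = z.val + 1 ∨ (z.val = n - 1 ∧ (z + 1).val = 0) := by
  have h := ZMod.val_add z 1
  have h1 : (1 : ZMod n).val = 1 := by
    rw [ZMod.val_one_eq_one_mod]; exact Nat.mod_eq_of_lt (by omega)
  rw [h1] at h
  have h2 := ZMod.val_lt (n := n) z
  rcases Nat.lt_or_ge (z.val + 1) n with hlt | hge
  · left; rw [Nat.mod_eq_of_lt hlt] at h; omega
  · right
    have hz : z.val = n - 1 := by omega
    rw [hz] at h
    have : (n - 1 + 1) % n = 0 := by
      have : n - 1 + 1 = n := by omega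
      rw [this, Nat.mod_self]
    omega

lemma arc_succ {n : ℕ} [NeZero n] (hn2 : 2 ≤ n) (p q y : ZMod n)
    (hyp : y ≠ p) (hyp' : y + 1 ≠ p) (hyq : y ≠ q) (hyq' : y + 1 ≠ q) (hqp : q ≠ p) :
    (inArc n p q (y + 1) ↔ inArc n p q y) := by
  have e : y + 1 - p = (y - p) + 1 := by ring
  have h1 := val_add_one hn2 (y - p)
  have hB : (y - p).val ≠ 0 := val_sub_ne_zero hyp
  have hA : ((y - p) + 1).val ≠ 0 := by rw [← e]; exact val_sub_ne_zero hyp'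
  have hT : (q - p).val ≠ 0 := val_sub_ne_zero hqp
  have hBT : (y - p).val ≠ (q - p).val := fun h =>
    hyq (by have := ZMod.val_injective n h; exact sub_left_inj.mp this)
  have hAT : ((y - p) + 1).val ≠ (q - p).val := fun h => by
    rw [← e] at h
    exact hyq' (sub_left_inj.mp (ZMod.val_injective n h))
  have hb1 := ZMod.val_lt ((y - p) + 1)
  have hb2 := ZMod.val_lt (y - p)
  have hb3 := ZMod.val_lt (q - p)
  unfold inArc
  rw [e]
  omega

lemma move1 {n : ℕ} [NeZero n] (hn2 : 2 ≤ n) (k p q x : ZMod n)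
    (hp : p ≠ k) (hp' : p ≠ k + 1) (hq : q ≠ k) (hq' : q ≠ k + 1) (hqp : q ≠ p) :
    (inArc n p q (Equiv.swap k (k + 1) x) ↔ inArc n p q x) := by
  rcases eq_or_ne x k with rfl | hxk
  · rw [Equiv.swap_apply_left]
    exact arc_succ hn2 p q x (Ne.symm hp) (Ne.symm hp') (Ne.symm hq) (Ne.symm hq') hqp
  rcases eq_or_ne x (k + 1) with rfl | hxk1
  · rw [Equiv.swap_apply_right]
    exact (arc_succ hn2 p q k (Ne.symm hp) (Ne.symm hp') (Ne.symm hq) (Ne.symm hq') hqp).symm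
  · rw [Equiv.swap_apply_of_ne_of_ne hxk hxk1]

lemma cross_right {n : ℕ} [NeZero n] (hn2 : 2 ≤ n) (k p q r t : ZMod n)
    (hp : p ≠ k) (hp' : p ≠ k + 1) (hq : q ≠ k) (hq' : q ≠ k + 1) (hqp : q ≠ p) :
    (Crossing n p q (Equiv.swap k (k + 1) r) (Equiv.swap k (k + 1) t) ↔ Crossing n p q r t) := by
  unfold Crossing
  rw [move1 hn2 k p q r hp hp' hq hq' hqp, move1 hn2 k p q t hp hp' hq hq' hqp]

lemma arc_flip {n : ℕ} [NeZero n] (p q x : ZMod n) (hpq : p ≠ q) (hxp : x ≠ p) (hxq : x ≠ q) :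
    (inArc n q p x ↔ ¬ inArc n p q x) := by
  have d1 := sub_val_cases p q
  have d2 := sub_val_cases q p
  have d3 := sub_val_cases x p
  have d4 := sub_val_cases x q
  have z1 := val_sub_ne_zero hpq
  have z2 := val_sub_ne_zero (Ne.symm hpq)
  have z3 := val_sub_ne_zero hxp
  have z4 := val_sub_ne_zero hxq
  have b1 := ZMod.val_lt (p - q)
  have b2 := ZMod.val_lt (q - p)
  have b3 := ZMod.val_lt (x - p)
  have b4 := ZMod.val_lt (x - q)
  have b5 := ZMod.val_lt (n := n) x
  have b6 := ZMod.val_lt (n := n) p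
  have b7 := ZMod.val_lt (n := n) q
  unfold inArc
  omega

lemma crossing_flip {n : ℕ} [NeZero n] (p q r t : ZMod n) (hpq : p ≠ q)
    (hrp : r ≠ p) (hrq : r ≠ q) (htp : t ≠ p) (htq : t ≠ q) :
    (Crossing n q p r t ↔ Crossing n p q r t) := by
  unfold Crossing
  rw [arc_flip p q r hpq hrp hrq, arc_flip p q t hpq htp htq]
  tauto

lemma arc_base_succ {n : ℕ} [NeZero n] (hn2 : 2 ≤ n) (k q x : ZMod n)
    (hq : q ≠ k) (hq' : q ≠ k + 1) (hx : x ≠ k) (hx' : x ≠ k + 1) :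
    (inArc n (k + 1) q x ↔ inArc n k q x) := by
  have e1 : x - k = (x - (k + 1)) + 1 := by ring
  have e2 : q - k = (q - (k + 1)) + 1 := by ring
  have h1 := val_add_one hn2 (x - (k + 1))
  have h2 := val_add_one hn2 (q - (k + 1))
  have z1 : (x - k).val ≠ 0 := val_sub_ne_zero hx
  have z2 : (q - k).val ≠ 0 := val_sub_ne_zero hq
  have z3 : (x - (k + 1)).val ≠ 0 := val_sub_ne_zero hx'
  have z4 : (q - (k + 1)).val ≠ 0 := val_sub_ne_zero hq'
  rw [← e1] at h1
  rw [← e2] at h2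
  have b1 := ZMod.val_lt (x - k)
  have b2 := ZMod.val_lt (q - k)
  have b3 := ZMod.val_lt (x - (k + 1))
  have b4 := ZMod.val_lt (q - (k + 1))
  unfold inArc
  omega

lemma arc_top_succ {n : ℕ} [NeZero n] (hn2 : 2 ≤ n) (k p x : ZMod n)
    (hp : p ≠ k) (hp' : p ≠ k + 1) (hx : x ≠ k) :
    (inArc n p (k + 1) x ↔ inArc n p k x) := by
  have e : k + 1 - p = (k - p) + 1 := by ring
  have h1 := val_add_one hn2 (k - p)
  rw [← e] at h1
  have z1 : (k - p).val ≠ 0 := val_sub_ne_zero (Ne.symm hp)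
  have z2 : (k + 1 - p).val ≠ 0 := val_sub_ne_zero (Ne.symm hp')
  have hxT : (x - p).val ≠ (k - p).val := fun h =>
    hx (sub_left_inj.mp (ZMod.val_injective n h))
  have b1 := ZMod.val_lt (k - p)
  have b2 := ZMod.val_lt (k + 1 - p)
  have b3 := ZMod.val_lt (x - p)
  unfold inArc
  omega

lemma cross_left {n : ℕ} [NeZero n] (hn2 : 2 ≤ n) (k p q r t : ZMod n)
    (hr : r ≠ k) (hr' : r ≠ k + 1) (ht : t ≠ k) (ht' : t ≠ k + 1)
    (hpq : p ≠ q) (hrp : r ≠ p) (hrq : r ≠ q) (htp : t ≠ p) (htq : t ≠ q) :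
    (Crossing n (Equiv.swap k (k + 1) p) (Equiv.swap k (k + 1) q) r t ↔ Crossing n p q r t) := by
  have hkk : k ≠ k + 1 := by
    intro h
    have h' : k + 1 = k + 0 := by rw [add_zero]; exact h.symm
    have : (0 : ZMod n) = 1 := (add_left_cancel h').symm
    have h1 : (1 : ZMod n).val = 1 := by
      rw [ZMod.val_one_eq_one_mod]; exact Nat.mod_eq_of_lt (by omega)
    have h0 : (0 : ZMod n).val = 0 := ZMod.val_zero
    rw [this] at h0; omega
  rcases eq_or_ne p k with rfl | hpk
  · rcases eq_or_ne q (p + 1) with rfl | hq1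
    · rw [Equiv.swap_apply_left, Equiv.swap_apply_right]
      exact crossing_flip p (p + 1) r t hpq hrp hrq htp htq
    · have hqk : q ≠ p := hpq.symm
      rw [Equiv.swap_apply_left, Equiv.swap_apply_of_ne_of_ne hqk hq1]
      unfold Crossing
      rw [arc_base_succ hn2 p q r hqk hq1 hrp hr', arc_base_succ hn2 p q t hqk hq1 htp ht']
  rcases eq_or_ne p (k + 1) with rfl | hpk1
  · rcases eq_or_ne q k with rfl | hqk
    · rw [Equiv.swap_apply_left, Equiv.swap_apply_right]
      exact (crossing_flip q (q + 1) r t (by exact fun hh => hpq hh.symm) hrq hrp htq htp).symm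
    · rw [Equiv.swap_apply_right, Equiv.swap_apply_of_ne_of_ne hqk hpq.symm]
      unfold Crossing
      rw [arc_base_succ hn2 k q r hqk hpq.symm hr hrp, arc_base_succ hn2 k q t hqk hpq.symm ht htp]
  · rw [Equiv.swap_apply_of_ne_of_ne hpk hpk1]
    rcases eq_or_ne q k with rfl | hqk
    · rw [Equiv.swap_apply_left]
      unfold Crossing
      rw [arc_top_succ hn2 q p r hpk hpk1 hr, arc_top_succ hn2 q p t hpk hpk1 ht]
    rcases eq_or_ne q (k + 1) with rfl | hqk1
    · rw [Equiv.swap_apply_right]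
      unfold Crossing
      rw [arc_top_succ hn2 k p r hpk hpk1 hr, arc_top_succ hn2 k p t hpk hpk1 ht]
    · rw [Equiv.swap_apply_of_ne_of_ne hqk hqk1]

/-- label of the first endpoint of the `z`-th chord. -/
def lbl (n m : ℕ) [NeZero n] (z : Fin m) : ZMod n := ((z : ℕ) : ZMod n)

/-- The pair `ab` is an "ordered crossing pair" for configuration `c`. -/
def PairCross (n m : ℕ) [NeZero n] (c : Equiv.Perm (ZMod n)) (ab : Fin m × Fin m) : Prop :=
  ab.1 < ab.2 ∧ Crossing n (c⁻¹ (lbl n m ab.1)) (c⁻¹ (lbl n m ab.1 + (m : ZMod n)))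
      (c⁻¹ (lbl n m ab.2)) (c⁻¹ (lbl n m ab.2 + (m : ZMod n)))

instance (n m : ℕ) [NeZero n] (c : Equiv.Perm (ZMod n)) : DecidablePred (PairCross n m c) :=
  fun _ => inferInstanceAs (Decidable (_ ∧ _))

/-- The crossing-number potential. -/
def Phi (n m : ℕ) [NeZero n] (c : Equiv.Perm (ZMod n)) : ℕ :=
  (Finset.univ.filter (PairCross n m c)).card

section labels

variable {n m : ℕ} [NeZero n]

lemma lbl_val (hn : n = 2 * m) (z : Fin m) : (lbl n m z).val = (z : ℕ) := by
  have := z.isLt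
  exact ZMod.val_cast_of_lt (by omega)

lemma lblm_eq (z : Fin m) : lbl n m z + (m : ZMod n) = (((z : ℕ) + m : ℕ) : ZMod n) := by
  unfold lbl; push_cast; ring

lemma lblm_val (hn : n = 2 * m) (z : Fin m) : (lbl n m z + (m : ZMod n)).val = (z : ℕ) + m := by
  rw [lblm_eq]
  have := z.isLt
  exact ZMod.val_cast_of_lt (by omega)

lemma lbl_inj (hn : n = 2 * m) {a b : Fin m} (h : lbl n m a = lbl n m b) : a = b := by
  have := congrArg ZMod.val h
  rw [lbl_val hn, lbl_val hn] at this
  exact Fin.ext this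

lemma lbl_ne_lblm (hn : n = 2 * m) (a b : Fin m) : lbl n m a ≠ lbl n m b + (m : ZMod n) := by
  intro h
  have := congrArg ZMod.val h
  rw [lbl_val hn, lblm_val hn] at this
  have ha := a.isLt
  omega

lemma lblm_inj (hn : n = 2 * m) {a b : Fin m} (h : lbl n m a + (m : ZMod n) = lbl n m b + (m : ZMod n)) :
    a = b := lbl_inj hn (by linear_combination h)

end labels

lemma phi_step {n m : ℕ} [NeZero n] (hm : 2 ≤ m) (hn : n = 2 * m)
    (c : Equiv.Perm (ZMod n)) (k : ZMod n) :
    Phi n m (c * Equiv.swap k (k + 1)) ≤ Phi n m c + 1 := by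
  have hn2 : 2 ≤ n := by omega
  set s : Equiv.Perm (ZMod n) := Equiv.swap k (k + 1) with hs
  have hinv : ∀ x : ZMod n, (c * s)⁻¹ x = s (c⁻¹ x) := by
    intro x
    rw [mul_inv_rev, Equiv.Perm.mul_apply, hs, Equiv.swap_inv]
  have inj : ∀ u v : ZMod n, c⁻¹ u = c⁻¹ v → u = v := fun u v h => by
    have := congrArg c h; simpa using this
  have kuniq : ∀ (u : ZMod n) (z w : Fin m),
      (c⁻¹ (lbl n m z) = u ∨ c⁻¹ (lbl n m z + (m : ZMod n)) = u) →
      (c⁻¹ (lbl n m w) = u ∨ c⁻¹ (lbl n m w + (m : ZMod n)) = u) → z = w := by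
    intro u z w hz hw
    rcases hz with hz | hz <;> rcases hw with hw | hw
    · exact lbl_inj hn (inj _ _ (hz.trans hw.symm))
    · exact absurd (inj _ _ (hz.trans hw.symm)) (lbl_ne_lblm hn z w)
    · exact absurd (inj _ _ (hw.trans hz.symm)) (lbl_ne_lblm hn w z)
    · exact lblm_inj hn (inj _ _ (hz.trans hw.symm))
  have key : ∀ x y : Fin m × Fin m,
      ¬(PairCross n m (c * s) x ↔ PairCross n m c x) →
      ¬(PairCross n m (c * s) y ↔ PairCross n m c y) → x = y := by
    have hM : ∀ a b : Fin m, ¬(PairCross n m (c * s) (a, b) ↔ PairCross n m c (a, b)) →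
        a < b ∧
        (c⁻¹ (lbl n m a) = k ∨ c⁻¹ (lbl n m a) = k + 1 ∨
         c⁻¹ (lbl n m a + (m : ZMod n)) = k ∨ c⁻¹ (lbl n m a + (m : ZMod n)) = k + 1) ∧
        (c⁻¹ (lbl n m b) = k ∨ c⁻¹ (lbl n m b) = k + 1 ∨
         c⁻¹ (lbl n m b + (m : ZMod n)) = k ∨ c⁻¹ (lbl n m b + (m : ZMod n)) = k + 1) := by
      intro a b hch
      have hab : a < b := by
        by_contra hab
        exact hch (iff_of_false (fun hh => hab hh.1) (fun hh => hab hh.1))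
      have hne : a ≠ b := ne_of_lt hab
      have dPaQa : c⁻¹ (lbl n m a) ≠ c⁻¹ (lbl n m a + (m : ZMod n)) :=
        fun h => lbl_ne_lblm hn a a (inj _ _ h)
      have dPbQb : c⁻¹ (lbl n m b) ≠ c⁻¹ (lbl n m b + (m : ZMod n)) :=
        fun h => lbl_ne_lblm hn b b (inj _ _ h)
      have dPaPb : c⁻¹ (lbl n m a) ≠ c⁻¹ (lbl n m b) :=
        fun h => hne (lbl_inj hn (inj _ _ h))
      have dPaQb : c⁻¹ (lbl n m a) ≠ c⁻¹ (lbl n m b + (m : ZMod n)) :=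
        fun h => lbl_ne_lblm hn a b (inj _ _ h)
      have dQaPb : c⁻¹ (lbl n m a + (m : ZMod n)) ≠ c⁻¹ (lbl n m b) :=
        fun h => lbl_ne_lblm hn b a (inj _ _ h).symm
      have dQaQb : c⁻¹ (lbl n m a + (m : ZMod n)) ≠ c⁻¹ (lbl n m b + (m : ZMod n)) :=
        fun h => hne (lblm_inj hn (inj _ _ h))
      refine ⟨hab, ?_, ?_⟩
      · by_contra hMa
        push_neg at hMa
        obtain ⟨h1, h2, h3, h4⟩ := hMa
        apply hch
        simp only [PairCross]
        apply and_congr_right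
        intro _
        rw [hinv, hinv, hinv, hinv, hs]
        rw [Equiv.swap_apply_of_ne_of_ne h1 h2, Equiv.swap_apply_of_ne_of_ne h3 h4]
        exact cross_right hn2 k _ _ _ _ h1 h2 h3 h4 dPaQa.symm
      · by_contra hMb
        push_neg at hMb
        obtain ⟨h1, h2, h3, h4⟩ := hMb
        apply hch
        simp only [PairCross]
        apply and_congr_right
        intro _
        rw [hinv, hinv, hinv, hinv, hs]
        rw [Equiv.swap_apply_of_ne_of_ne h1 h2, Equiv.swap_apply_of_ne_of_ne h3 h4]
        exact cross_left hn2 k _ _ _ _ h1 h2 h3 h4 dPaQa dPaPb.symm dQaPb.symm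
          dPaQb.symm dQaQb.symm
    have split : ∀ a b : Fin m, a < b →
        (c⁻¹ (lbl n m a) = k ∨ c⁻¹ (lbl n m a) = k + 1 ∨
         c⁻¹ (lbl n m a + (m : ZMod n)) = k ∨ c⁻¹ (lbl n m a + (m : ZMod n)) = k + 1) →
        (c⁻¹ (lbl n m b) = k ∨ c⁻¹ (lbl n m b) = k + 1 ∨
         c⁻¹ (lbl n m b + (m : ZMod n)) = k ∨ c⁻¹ (lbl n m b + (m : ZMod n)) = k + 1) →
        (((c⁻¹ (lbl n m a) = k ∨ c⁻¹ (lbl n m a + (m : ZMod n)) = k) ∧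
          (c⁻¹ (lbl n m b) = k + 1 ∨ c⁻¹ (lbl n m b + (m : ZMod n)) = k + 1)) ∨
         ((c⁻¹ (lbl n m a) = k + 1 ∨ c⁻¹ (lbl n m a + (m : ZMod n)) = k + 1) ∧
          (c⁻¹ (lbl n m b) = k ∨ c⁻¹ (lbl n m b + (m : ZMod n)) = k))) := by
      intro a b hab ha hb
      have hKa : (c⁻¹ (lbl n m a) = k ∨ c⁻¹ (lbl n m a + (m : ZMod n)) = k) ∨
          (c⁻¹ (lbl n m a) = k + 1 ∨ c⁻¹ (lbl n m a + (m : ZMod n)) = k + 1) := by tauto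
      have hKb : (c⁻¹ (lbl n m b) = k ∨ c⁻¹ (lbl n m b + (m : ZMod n)) = k) ∨
          (c⁻¹ (lbl n m b) = k + 1 ∨ c⁻¹ (lbl n m b + (m : ZMod n)) = k + 1) := by tauto
      rcases hKa with hKa | hKa <;> rcases hKb with hKb | hKb
      · exact absurd (kuniq k a b hKa hKb) (ne_of_lt hab)
      · exact Or.inl ⟨hKa, hKb⟩
      · exact Or.inr ⟨hKa, hKb⟩
      · exact absurd (kuniq (k + 1) a b hKa hKb) (ne_of_lt hab)
    rintro ⟨a, b⟩ ⟨a', b'⟩ hx hy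
    obtain ⟨hab, hMa, hMb⟩ := hM a b hx
    obtain ⟨hab', hMa', hMb'⟩ := hM a' b' hy
    rcases split a b hab hMa hMb with ⟨ha, hb⟩ | ⟨ha, hb⟩ <;>
      rcases split a' b' hab' hMa' hMb' with ⟨ha', hb'⟩ | ⟨ha', hb'⟩
    · rw [kuniq k a a' ha ha', kuniq (k + 1) b b' hb hb']
    · exfalso
      have e1 : a = b' := kuniq k a b' ha hb'
      have e2 : b = a' := kuniq (k + 1) b a' hb ha'
      rw [e2] at hab
      have := hab.trans hab'
      rw [← e1] at this
      exact lt_irrefl a this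
    · exfalso
      have e1 : a = b' := kuniq (k + 1) a b' ha hb'
      have e2 : b = a' := kuniq k b a' hb ha'
      rw [e2] at hab
      have := hab.trans hab'
      rw [← e1] at this
      exact lt_irrefl a this
    · rw [kuniq (k + 1) a a' ha ha', kuniq k b b' hb hb']
  obtain ⟨e, he⟩ : ∃ e : Fin m × Fin m,
      ∀ x, x ≠ e → (PairCross n m (c * s) x ↔ PairCross n m c x) := by
    by_cases h : ∃ x, ¬(PairCross n m (c * s) x ↔ PairCross n m c x)
    · obtain ⟨e, hex⟩ := h
      exact ⟨e, fun x hx => by_contra fun hc => hx (key x e hc hex)⟩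
    · refine ⟨(⟨0, by omega⟩, ⟨0, by omega⟩), fun x _ => ?_⟩
      by_contra hc; exact h ⟨x, hc⟩
  unfold Phi
  refine le_trans (Finset.card_le_card ?_)
    (Finset.card_insert_le e (Finset.univ.filter (PairCross n m c)))
  intro x hx
  rcases eq_or_ne x e with rfl | hxe
  · exact Finset.mem_insert_self _ _
  · rw [Finset.mem_insert]
    right
    rw [Finset.mem_filter] at hx ⊢
    exact ⟨hx.1, (he x hxe).mp hx.2⟩

lemma phi_init {n m : ℕ} [NeZero n] (hm : 2 ≤ m) (hn : n = 2 * m)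
    (σ : Equiv.Perm (ZMod n))
    (hσ : ∀ i : ZMod n,
      σ i = if (i.val : ℕ) < m then i else ((3 * m - 1 - i.val : ℕ) : ZMod n)) :
    Phi n m σ = 0 := by
  unfold Phi
  rw [Finset.card_eq_zero, Finset.filter_eq_empty_iff]
  rintro ⟨a, b⟩ -
  rintro ⟨hab, hcr⟩
  dsimp only at hab hcr
  have hP : ∀ z : Fin m, σ⁻¹ (lbl n m z) = lbl n m z := by
    intro z
    have h1 : σ (lbl n m z) = lbl n m z := by
      rw [hσ, lbl_val hn, if_pos z.isLt]
    exact Equiv.Perm.inv_eq_iff_eq.mpr h1.symm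
  have hQ : ∀ z : Fin m,
      σ⁻¹ (lbl n m z + (m : ZMod n)) = ((2 * m - 1 - (z : ℕ) : ℕ) : ZMod n) := by
    intro z
    have hzlt := z.isLt
    have hv : (((2 * m - 1 - (z : ℕ) : ℕ) : ZMod n)).val = 2 * m - 1 - (z : ℕ) :=
      ZMod.val_cast_of_lt (by omega)
    have h1 : σ (((2 * m - 1 - (z : ℕ) : ℕ) : ZMod n)) = lbl n m z + (m : ZMod n) := by
      rw [hσ, hv, if_neg (by omega), lblm_eq]
      congr 1
      omega
    exact Equiv.Perm.inv_eq_iff_eq.mpr h1.symm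
  rw [hP, hP, hQ, hQ] at hcr
  unfold Crossing inArc at hcr
  apply hcr
  have ha := a.isLt
  have hb := b.isLt
  have habv : (a : ℕ) < (b : ℕ) := hab
  have va := lbl_val (n := n) hn a
  have vb := lbl_val (n := n) hn b
  have vQa : (((2 * m - 1 - (a : ℕ) : ℕ) : ZMod n)).val = 2 * m - 1 - (a : ℕ) :=
    ZMod.val_cast_of_lt (by omega)
  have vQb : (((2 * m - 1 - (b : ℕ) : ℕ) : ZMod n)).val = 2 * m - 1 - (b : ℕ) :=
    ZMod.val_cast_of_lt (by omega)
  have d1 := sub_val_cases (lbl n m b) (lbl n m a)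
  have d2 := sub_val_cases (((2 * m - 1 - (a : ℕ) : ℕ) : ZMod n)) (lbl n m a)
  have d3 := sub_val_cases (((2 * m - 1 - (b : ℕ) : ℕ) : ZMod n)) (lbl n m a)
  rw [va, vb] at d1
  rw [vQa, va] at d2
  rw [vQb, va] at d3
  have b1 := ZMod.val_lt (lbl n m b - lbl n m a)
  have b2 := ZMod.val_lt ((((2 * m - 1 - (a : ℕ) : ℕ) : ZMod n)) - lbl n m a)
  have b3 := ZMod.val_lt ((((2 * m - 1 - (b : ℕ) : ℕ) : ZMod n)) - lbl n m a)
  omega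

lemma phi_count {m : ℕ} :
    (Finset.univ.filter (fun ab : Fin m × Fin m => ab.1 < ab.2)).card = m.choose 2 := by
  rw [Finset.card_filter, ← Finset.univ_product_univ, Finset.sum_product_right]
  have step : ∀ b : Fin m, (∑ a : Fin m, if (a, b).1 < (a, b).2 then 1 else 0) = (b : ℕ) := by
    intro b
    rw [← Finset.card_filter]
    have h2 : Finset.univ.filter (fun a : Fin m => (a, b).1 < (a, b).2) = Finset.Iio b := by
      ext x; simp
    rw [h2, Fin.card_Iio]
  rw [Finset.sum_congr rfl (fun b _ => step b)]
  rw [Fin.sum_univ_eq_sum_range (fun i => i) m]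
  have := Finset.sum_range_id_mul_two m
  rw [Nat.choose_two_right]
  omega

lemma phi_final {n m : ℕ} [NeZero n] (hm : 2 ≤ m) (hn : n = 2 * m)
    (c : Equiv.Perm (ZMod n)) (r : ZMod n)
    (h : (∀ i : ZMod n, c i = i + r) ∨ (∀ i : ZMod n, c i = r - i)) :
    Phi n m c = m.choose 2 := by
  have hn2 : 2 ≤ n := by omega
  unfold Phi
  rw [← phi_count (m := m)]
  apply congrArg
  apply Finset.filter_congr
  rintro ⟨a, b⟩ -
  simp only [PairCross]
  constructor
  · exact fun hh => hh.1
  intro hab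
  refine ⟨hab, ?_⟩
  have ha := a.isLt
  have hb := b.isLt
  have habv : (a : ℕ) < (b : ℕ) := hab
  have vm : ((m : ℕ) : ZMod n).val = m := ZMod.val_cast_of_lt (by omega)
  rcases h with h | h
  · have hinv : ∀ x : ZMod n, c⁻¹ x = x - r := by
      intro x
      have hx : c (x - r) = x := by rw [h]; ring
      exact Equiv.Perm.inv_eq_iff_eq.mpr hx.symm
    have e1 : c⁻¹ (lbl n m b) - c⁻¹ (lbl n m a) = lbl n m b - lbl n m a := by
      rw [hinv, hinv]; ring
    have e2 : c⁻¹ (lbl n m a + (m : ZMod n)) - c⁻¹ (lbl n m a) = ((m : ℕ) : ZMod n) := by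
      rw [hinv, hinv]; ring
    have e3 : c⁻¹ (lbl n m b + (m : ZMod n)) - c⁻¹ (lbl n m a)
        = (lbl n m b + (m : ZMod n)) - lbl n m a := by
      rw [hinv, hinv]; ring
    unfold Crossing inArc
    rw [e1, e2, e3, vm]
    have d1 := sub_val_cases (lbl n m b) (lbl n m a)
    have d3 := sub_val_cases (lbl n m b + (m : ZMod n)) (lbl n m a)
    rw [lbl_val hn, lbl_val hn] at d1
    rw [lblm_val hn, lbl_val hn] at d3
    have b1 := ZMod.val_lt (lbl n m b - lbl n m a)
    have b3 := ZMod.val_lt (lbl n m b + (m : ZMod n) - lbl n m a)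
    omega
  · have hinv : ∀ x : ZMod n, c⁻¹ x = r - x := by
      intro x
      have hx : c (r - x) = x := by rw [h]; ring
      exact Equiv.Perm.inv_eq_iff_eq.mpr hx.symm
    have e1 : c⁻¹ (lbl n m b) - c⁻¹ (lbl n m a) = lbl n m a - lbl n m b := by
      rw [hinv, hinv]; ring
    have e2 : c⁻¹ (lbl n m a + (m : ZMod n)) - c⁻¹ (lbl n m a)
        = (0 : ZMod n) - ((m : ℕ) : ZMod n) := by
      rw [hinv, hinv]; ring
    have e3 : c⁻¹ (lbl n m b + (m : ZMod n)) - c⁻¹ (lbl n m a)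
        = lbl n m a - (lbl n m b + (m : ZMod n)) := by
      rw [hinv, hinv]; ring
    unfold Crossing inArc
    rw [e1, e2, e3]
    have d1 := sub_val_cases (lbl n m a) (lbl n m b)
    have d2 := sub_val_cases (0 : ZMod n) ((m : ℕ) : ZMod n)
    have d3 := sub_val_cases (lbl n m a) (lbl n m b + (m : ZMod n))
    rw [lbl_val hn, lbl_val hn] at d1
    rw [vm, ZMod.val_zero] at d2
    rw [lbl_val hn, lblm_val hn] at d3
    have b1 := ZMod.val_lt (lbl n m a - lbl n m b)
    have b2 := ZMod.val_lt ((0 : ZMod n) - ((m : ℕ) : ZMod n))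
    have b3 := ZMod.val_lt (lbl n m a - (lbl n m b + (m : ZMod n)))
    omega

lemma phi_list {n m : ℕ} [NeZero n] (hm : 2 ≤ m) (hn : n = 2 * m)
    (l : List (Equiv.Perm (ZMod n))) :
    ∀ c : Equiv.Perm (ZMod n), (∀ τ ∈ l, ∃ k : ZMod n, τ = Equiv.swap k (k + 1)) →
      Phi n m (c * l.prod) ≤ Phi n m c + l.length := by
  induction l with
  | nil => intro c _; simp
  | cons τ L ih =>
    intro c hl
    obtain ⟨k, rfl⟩ := hl τ List.mem_cons_self
    rw [List.prod_cons, ← mul_assoc]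
    have h1 := ih (c * Equiv.swap k (k + 1)) (fun τ' hτ' => hl τ' (List.mem_cons_of_mem _ hτ'))
    have h2 := phi_step hm hn c k
    simp only [List.length_cons]
    omega

end SwapLB

/-- The lower bound construction for Swap Planarity on an `n`-cycle, `n = 2m`:
the configuration listing `p₁,…,p_m` followed by `p_n,…,p_{m+1}` needs at least
`C(m,2)` cyclic adjacent transpositions to reach a rotation or reflection of the
identity cyclic order. Positions and labels are indexed by `ZMod n`; a cyclic
adjacent transposition exchanges the contents of cyclically consecutive
positions `k` and `k+1`, i.e. the configuration `c` becomes `c * Equiv.swap k (k+1)`. -/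
theorem cyclic_adjacent_swap_lower_bound (m : ℕ) (hm : 2 ≤ m) (n : ℕ) (hn : n = 2 * m)
    [NeZero n] (σ : Equiv.Perm (ZMod n))
    (hσ : ∀ i : ZMod n,
      σ i = if (i.val : ℕ) < m then i else ((3 * m - 1 - i.val : ℕ) : ZMod n))
    (l : List (Equiv.Perm (ZMod n)))
    (hl : ∀ τ ∈ l, ∃ k : ZMod n, τ = Equiv.swap k (k + 1))
    (hfinal : ∃ r : ZMod n,
      (∀ i : ZMod n, (σ * l.prod) i = i + r) ∨ (∀ i : ZMod n, (σ * l.prod) i = r - i)) :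
    Nat.choose m 2 ≤ l.length := by
  obtain ⟨r, hr⟩ := hfinal
  have h1 : SwapLB.Phi n m (σ * l.prod) = m.choose 2 := SwapLB.phi_final hm hn _ r hr
  have h2 := SwapLB.phi_list hm hn l σ hl
  have h3 := SwapLB.phi_init hm hn σ hσ
  omega
end

section
/- In a connected graph G on vertex set V with |V| = n, for any target bijection f : V → V, there is a sequence of at most n(n-1)/2 swaps along edges of G (each swap exchanging the current labels at the two endpoints of an edge) transforming the identity labeling into f. -/
open Equiv

/-- A walk gives a list of adjacent swaps whose product moves the start to the end. -/
private lemma swaps_of_walk {V : Type*} [DecidableEq V] {G : SimpleGraph V} {a b : V}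
    (p : G.Walk a b) :
    ∃ l : List (Equiv.Perm V), (∀ τ ∈ l, ∃ u v : V, G.Adj u v ∧ τ = Equiv.swap u v) ∧
      l.prod a = b ∧ l.length = p.length := by
  induction p with
  | nil => exact ⟨[], by simp, by simp, by simp⟩
  | @cons u x v h p ih =>
    obtain ⟨l, hl, hprod, hlen⟩ := ih
    refine ⟨l ++ [Equiv.swap u x], ?_, ?_, ?_⟩
    · intro τ hτ
      rcases List.mem_append.mp hτ with h' | h'
      · exact hl τ h'
      · simp only [List.mem_singleton] at h'
        exact ⟨u, x, h, h'⟩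
    · simp only [List.prod_append, List.prod_singleton, Equiv.Perm.mul_apply,
        Equiv.swap_apply_left]
      exact hprod
    · simp [hlen]

private lemma token_swapping_aux : ∀ (n : ℕ) {V : Type u} [Fintype V] [DecidableEq V]
    (G : SimpleGraph V), Fintype.card V = n → G.Connected → ∀ f : Equiv.Perm V,
    ∃ l : List (Equiv.Perm V),
      (∀ τ ∈ l, ∃ u v : V, G.Adj u v ∧ τ = Equiv.swap u v) ∧
      l.prod = f ∧
      l.length ≤ n * (n - 1) / 2 := by
  intro n
  induction n using Nat.strong_induction_on with
  | _ n ih =>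
    intro V _ _ G hcard hG f
    by_cases hn : n ≤ 1
    · -- trivial case: at most one vertex
      have : Subsingleton V := by
        rw [← Fintype.card_le_one_iff_subsingleton, hcard]; exact hn
      refine ⟨[], by simp, ?_, by simp⟩
      ext x
      simp [Subsingleton.elim (f x) x]
    · push_neg at hn
      have hV : Nonempty V := by
        rw [← Fintype.card_pos_iff, hcard]; omega
      obtain ⟨r⟩ := hV
      -- pick v at maximal distance from r
      obtain ⟨v, -, hvmax⟩ := Finset.exists_max_image Finset.univ (G.dist r)
        ⟨r, Finset.mem_univ r⟩
      have hvmax' : ∀ x : V, G.dist r x ≤ G.dist r v := fun x => hvmax x (Finset.mem_univ x)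
      have hvr : v ≠ r := by
        obtain ⟨y, hy⟩ := Fintype.exists_ne_of_one_lt_card (by omega : 1 < Fintype.card V) r
        intro hvr
        have h0 : G.dist r y ≠ 0 := by
          rw [Ne, hG.dist_eq_zero_iff]; exact fun h => hy h.symm
        have := hvmax' y
        rw [hvr, SimpleGraph.dist_self] at this
        omega
      -- every vertex ≠ v has a shortest walk to r avoiding v
      have key : ∀ w : V, w ≠ v → ∃ p : G.Walk w r, v ∉ p.support := by
        intro w hw
        obtain ⟨p, hp⟩ := hG.exists_walk_length_eq_dist w r
        refine ⟨p, fun hv => ?_⟩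
        have h1 : G.dist w v ≤ (p.takeUntil v hv).length := SimpleGraph.dist_le _
        have h2 : G.dist v r ≤ (p.dropUntil v hv).length := SimpleGraph.dist_le _
        have h3 : (p.takeUntil v hv).length + (p.dropUntil v hv).length = p.length := by
          rw [← SimpleGraph.Walk.length_append, SimpleGraph.Walk.take_spec]
        have h4 : G.dist w r ≤ G.dist v r := by
          rw [SimpleGraph.dist_comm]
          rw [SimpleGraph.dist_comm (u := v)]
          exact hvmax' w
        have h5 : G.dist w v = 0 := by omega
        rw [hG.dist_eq_zero_iff] at h5
        exact hw h5
      set s : Set V := {x | x ≠ v} with hs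
      have hrs : r ∈ s := Ne.symm hvr
      -- connectivity of the induced graph on s
      have hconn : (G.induce s).Connected := by
        apply G.induce_connected_of_patches r hrs
        intro w hw
        obtain ⟨p, hp⟩ := key w hw
        let p' := p.reverse
        have hp' : v ∉ p'.support := by
          rwa [SimpleGraph.Walk.support_reverse, List.mem_reverse]
        refine ⟨{x | x ∈ p'.support}, ?_, p'.start_mem_support, p'.end_mem_support, ?_⟩
        · intro x hx
          exact fun hxv => hp' (hxv ▸ hx)
        · exact (p'.connected_induce_support).preconnected _ _
      -- walk from v to f v, turned into a path
      obtain ⟨q0⟩ := hG.preconnected v (f v)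
      have hq : q0.bypass.IsPath := q0.bypass_isPath
      have hqlen : q0.bypass.length < Fintype.card V := hq.length_lt
      obtain ⟨lσ, hlσ_mem, hlσ_prod, hlσ_len⟩ := swaps_of_walk q0.bypass
      set σ : Equiv.Perm V := lσ.prod with hσ
      have hσv : σ v = f v := hlσ_prod
      set g : Equiv.Perm V := σ⁻¹ * f with hg
      have hgv : g v = v := by
        simp only [hg, Equiv.Perm.mul_apply]
        rw [← hσv]
        exact Equiv.symm_apply_apply σ v
      have h₁ : ∀ x : V, x ∈ s ↔ g x ∈ s := by
        intro x
        simp only [hs, Set.mem_setOf_eq]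
        constructor
        · intro hx hgx
          exact hx (g.injective (by rw [hgx, hgv]))
        · intro hgx hx
          exact hgx (by rw [hx, hgv])
      letI : DecidablePred (· ∈ s) := Classical.decPred _
      have h₂ : ∀ x : V, g x ≠ x → x ∈ s := by
        intro x hx hxv
        exact hx (by rw [hxv, hgv])
      set g' : Equiv.Perm s := g.subtypePerm (fun x => (h₁ x).symm) with hg'
      have hcard' : Fintype.card s = n - 1 := by
        have : Fintype.card s = Fintype.card {x : V // ¬ x = v} :=
          Fintype.card_congr (Equiv.subtypeEquivRight (fun x => by simp [hs]))
        rw [this, Fintype.card_subtype_compl, Fintype.card_subtype_eq, hcard]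
      obtain ⟨l', hl'_mem, hl'_prod, hl'_len⟩ :=
        ih (n - 1) (by omega) (G.induce s) hcard' hconn g'
      set l₂ : List (Equiv.Perm V) := l'.map (Equiv.Perm.ofSubtype) with hl₂
      have hl₂_prod : l₂.prod = g := by
        rw [hl₂, ← map_list_prod (Equiv.Perm.ofSubtype), hl'_prod, hg']
        exact Equiv.Perm.ofSubtype_subtypePerm (fun x => (h₁ x).symm) h₂
      refine ⟨lσ ++ l₂, ?_, ?_, ?_⟩
      · intro τ hτ
        rcases List.mem_append.mp hτ with h' | h'
        · exact hlσ_mem τ h'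
        · rw [hl₂, List.mem_map] at h'
          obtain ⟨τ', hτ', rfl⟩ := h'
          obtain ⟨u', w', hadj, rfl⟩ := hl'_mem τ' hτ'
          refine ⟨u', w', hadj, ?_⟩
          exact Equiv.Perm.ofSubtype_swap_eq u' w'
      · rw [List.prod_append, hl₂_prod, hg]
        exact mul_inv_cancel_left σ f
      · rw [List.length_append]
        have e1 : lσ.length ≤ n - 1 := by omega
        have e2 : l₂.length ≤ (n - 1) * (n - 1 - 1) / 2 := by
          rw [hl₂, List.length_map]; exact hl'_len
        obtain ⟨m, rfl⟩ : ∃ m, n = m + 2 := ⟨n - 2, by omega⟩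
        have d1 : 2 ∣ (m + 1) * m := by
          rw [mul_comm]; exact (Nat.even_mul_succ_self m).two_dvd
        have d2 : 2 ∣ (m + 2) * (m + 1) := by
          rw [mul_comm]; exact (Nat.even_mul_succ_self (m + 1)).two_dvd
        have q1 : (m + 1) * m / 2 * 2 = (m + 1) * m := Nat.div_mul_cancel d1
        have q2 : (m + 2) * (m + 1) / 2 * 2 = (m + 2) * (m + 1) := Nat.div_mul_cancel d2
        have hr : (m + 2) * (m + 1) = (m + 1) * m + 2 * (m + 1) := by ring
        simp only [show m + 2 - 1 = m + 1 from rfl, show m + 1 - 1 = m from rfl,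
          show m + 2 - 1 - 1 = m from rfl] at e1 e2 ⊢
        omega

/-- Token swapping upper bound: in a connected graph on `n` vertices, any target
bijection can be reached from the identity labeling by at most `n(n-1)/2` swaps
along edges. -/
theorem token_swapping_upper_bound {V : Type*} [Fintype V] [DecidableEq V]
    (G : SimpleGraph V) (hG : G.Connected) (f : Equiv.Perm V) :
    ∃ l : List (Equiv.Perm V),
      (∀ τ ∈ l, ∃ u v : V, G.Adj u v ∧ τ = Equiv.swap u v) ∧
      l.prod = f ∧
      l.length ≤ Fintype.card V * (Fintype.card V - 1) / 2 := by
  exact token_swapping_aux (Fintype.card V) G rfl hG f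
end
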